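/- arXiv:0706.0333 — 2 statements merged into one kernel-verified Lean document; each statement's English description precedes it below -/
import Mathlib

section
/- Let j ≥ 1 and let W_j be a random variable with density (4^{j−1}((j−1)!)²/(π(2j−2)!)) cos^{2(j−1)}(v) on (−π/2, π/2). Then for every real s with |s| < 1, E[e^{i s W_j}] = Γ(j)² / ( Γ(j + s/2) Γ(j − s/2) ). -/
open MeasureTheory ProbabilityTheory

/-- The law of `W_j`: density `(4^{j-1}((j-1)!)²/(π(2j-2)!)) cos^{2(j-1)}(v)` on
`(-π/2, π/2)`. -/
noncomputable def wMeasure (j : ℕ) : Measure ℝ :=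
  volume.withDensity fun v => ENNReal.ofReal
    (Set.indicator (Set.Ioo (-(Real.pi / 2)) (Real.pi / 2))
      (fun u => 4 ^ (j - 1) * (Nat.factorial (j - 1) : ℝ) ^ 2 /
        (Real.pi * (Nat.factorial (2 * j - 2) : ℝ)) * Real.cos u ^ (2 * (j - 1))) v)

open Real intervalIntegral
open scoped ENNReal NNReal

noncomputable def cosFour (s : ℝ) (n : ℕ) : ℂ :=
  ∫ v in (-(π/2))..(π/2), Complex.exp (Complex.I * s * v) * ((Real.cos v ^ n : ℝ) : ℂ)

lemma hasDerivAt_exp_aux (s : ℝ) (x : ℝ) :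
    HasDerivAt (fun v : ℝ => Complex.exp (Complex.I * s * v))
      (Complex.I * s * Complex.exp (Complex.I * s * x)) x := by
  rw [show Complex.I * s * Complex.exp (Complex.I * s * x)
      = Complex.exp (Complex.I * s * (x:ℂ)) * (Complex.I * s * 1) by ring]
  exact (((hasDerivAt_id (x : ℂ)).const_mul (Complex.I * s)).cexp).comp_ofReal

lemma intble_aux (s : ℝ) {f : ℝ → ℝ} (hf : Continuous f) (a b : ℝ) :
    IntervalIntegrable (fun v : ℝ => Complex.exp (Complex.I * s * v) * ((f v : ℝ) : ℂ))
      volume a b := by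
  apply Continuous.intervalIntegrable
  fun_prop

lemma hasDerivAt_H (s : ℝ) (n : ℕ) (x : ℝ) :
    HasDerivAt (fun v : ℝ => Complex.exp (Complex.I * s * v) * ((Real.cos v ^ (n+1) : ℝ) : ℂ))
      (Complex.I * s * (Complex.exp (Complex.I * s * x) * ((Real.cos x ^ (n+1) : ℝ) : ℂ))
        - ((n:ℂ)+1) * (Complex.exp (Complex.I * s * x)
            * ((Real.cos x ^ n * Real.sin x : ℝ) : ℂ))) x := by
  have h2 : HasDerivAt (fun v : ℝ => ((Real.cos v ^ (n+1) : ℝ) : ℂ))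
      ((((n+1) * Real.cos x ^ n * (-Real.sin x) : ℝ)) : ℂ) x := by
    exact_mod_cast HasDerivAt.ofReal_comp
      (((Real.hasDerivAt_cos x).pow (n+1)).congr_deriv (by push_cast; ring))
  have := (hasDerivAt_exp_aux s x).mul h2
  refine this.congr_deriv (Eq.symm ?_)
  push_cast
  ring

lemma hasDerivAt_G (s : ℝ) (n : ℕ) (x : ℝ) :
    HasDerivAt (fun v : ℝ =>
        Complex.exp (Complex.I * s * v) * ((Real.cos v ^ (n+1) * Real.sin v : ℝ) : ℂ))
      (Complex.I * s * (Complex.exp (Complex.I * s * x)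
          * ((Real.cos x ^ (n+1) * Real.sin x : ℝ) : ℂ))
        + ((n:ℂ)+2) * (Complex.exp (Complex.I * s * x) * ((Real.cos x ^ (n+2) : ℝ) : ℂ))
        - ((n:ℂ)+1) * (Complex.exp (Complex.I * s * x) * ((Real.cos x ^ n : ℝ) : ℂ))) x := by
  have hr : HasDerivAt (fun v : ℝ => Real.cos v ^ (n+1) * Real.sin v)
      (((n+2) * Real.cos x ^ (n+2) - (n+1) * Real.cos x ^ n : ℝ)) x := by
    have := (((Real.hasDerivAt_cos x).pow (n+1)).mul (Real.hasDerivAt_sin x))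
    refine this.congr_deriv (Eq.symm ?_)
    have hs2 : Real.sin x ^ 2 = 1 - Real.cos x ^ 2 := Real.sin_sq x
    simp only [Nat.add_sub_cancel, Pi.pow_apply]
    push_cast
    linear_combination ((n:ℝ)+1) * Real.cos x ^ n * hs2
  have h2 := HasDerivAt.ofReal_comp hr
  have := (hasDerivAt_exp_aux s x).mul h2
  refine this.congr_deriv (Eq.symm ?_)
  push_cast
  ring

lemma cosFour_rec (s : ℝ) (n : ℕ) :
    (((n:ℂ)+2)^2 - (s:ℂ)^2) * cosFour s (n+2) = ((n:ℂ)+2)*((n:ℂ)+1) * cosFour s n := by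
  set J : ℂ := ∫ v in (-(π/2))..(π/2),
    Complex.exp (Complex.I * s * v) * ((Real.cos v ^ (n+1) * Real.sin v : ℝ) : ℂ) with hJ
  have hend : Real.cos (π/2) = 0 := Real.cos_pi_div_two
  have hend' : Real.cos (-(π/2)) = 0 := by rw [Real.cos_neg]; exact hend
  -- E1
  have E1 : Complex.I * s * cosFour s (n+2) - ((n:ℂ)+2) * J = 0 := by
    have ftc := intervalIntegral.integral_eq_sub_of_hasDerivAt
      (f := fun v : ℝ => Complex.exp (Complex.I * s * v) * ((Real.cos v ^ (n+2) : ℝ) : ℂ))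
      (a := -(π/2)) (b := π/2)
      (fun x _ => hasDerivAt_H s (n+1) x)
      (by apply Continuous.intervalIntegrable; fun_prop)
    rw [intervalIntegral.integral_sub
        (by apply Continuous.intervalIntegrable; fun_prop)
        (by apply Continuous.intervalIntegrable; fun_prop),
      intervalIntegral.integral_const_mul, intervalIntegral.integral_const_mul] at ftc
    simp only [hend, hend'] at ftc
    simp only [zero_pow (by omega : n + 2 ≠ 0), Complex.ofReal_zero, mul_zero, sub_zero] at ftc
    have hc : ((n+1:ℕ):ℂ) + 1 = (n:ℂ) + 2 := by push_cast; ring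
    rw [hc] at ftc
    rw [cosFour, hJ]
    linear_combination ftc
  -- E2
  have iB : IntervalIntegrable (fun v : ℝ => Complex.I * s * (Complex.exp (Complex.I * s * v)
      * ((Real.cos v ^ (n+1) * Real.sin v : ℝ) : ℂ))) volume (-(π/2)) (π/2) := by
    apply Continuous.intervalIntegrable; fun_prop
  have iC : IntervalIntegrable (fun v : ℝ => ((n:ℂ)+2) * (Complex.exp (Complex.I * s * v)
      * ((Real.cos v ^ (n+2) : ℝ) : ℂ))) volume (-(π/2)) (π/2) := by
    apply Continuous.intervalIntegrable; fun_prop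
  have iD : IntervalIntegrable (fun v : ℝ => ((n:ℂ)+1) * (Complex.exp (Complex.I * s * v)
      * ((Real.cos v ^ n : ℝ) : ℂ))) volume (-(π/2)) (π/2) := by
    apply Continuous.intervalIntegrable; fun_prop
  have E2 : Complex.I * s * J + ((n:ℂ)+2) * cosFour s (n+2) - ((n:ℂ)+1) * cosFour s n = 0 := by
    have ftc := intervalIntegral.integral_eq_sub_of_hasDerivAt
      (f := fun v : ℝ => Complex.exp (Complex.I * s * v)
          * ((Real.cos v ^ (n+1) * Real.sin v : ℝ) : ℂ))
      (a := -(π/2)) (b := π/2)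
      (fun x _ => hasDerivAt_G s n x)
      (by apply Continuous.intervalIntegrable; fun_prop)
    rw [intervalIntegral.integral_sub (iB.add iC) iD,
      intervalIntegral.integral_add iB iC,
      intervalIntegral.integral_const_mul, intervalIntegral.integral_const_mul,
      intervalIntegral.integral_const_mul] at ftc
    simp only [hend, hend'] at ftc
    simp only [zero_pow (by omega : n + 1 ≠ 0), Complex.ofReal_zero, mul_zero, zero_mul,
      sub_zero] at ftc
    rw [cosFour, cosFour, hJ]
    linear_combination ftc
  linear_combination ((n:ℂ)+2) * E2 + Complex.I * s * E1
    - (s:ℂ)^2 * cosFour s (n+2) * Complex.I_sq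

lemma cosFour_zero (s : ℝ) (hs : |s| < 1) :
    cosFour s 0 = ((π / (Real.Gamma (1 + s/2) * Real.Gamma (1 - s/2)) : ℝ) : ℂ) := by
  rcases eq_or_ne s 0 with rfl | hs0
  · simp only [cosFour]
    norm_num [Real.Gamma_one]
  · have hc : (Complex.I * (s:ℂ)) ≠ 0 := by
      simp [Complex.I_ne_zero, hs0]
    have h1 : cosFour s 0 = ∫ v in (-(π/2))..(π/2), Complex.exp (Complex.I * s * v) := by
      simp [cosFour]
    rw [h1]
    have h2 : ∀ v : ℝ, Complex.exp (Complex.I * (s:ℂ) * v) = Complex.exp ((Complex.I * s) * v) := by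
      intro v; ring_nf
    rw [integral_exp_mul_complex hc]
    -- numerator = 2 I sin (s * π/2)
    have hnum : Complex.exp (Complex.I * s * (π/2 : ℝ)) - Complex.exp (Complex.I * s * (-(π/2) : ℝ))
        = 2 * Complex.I * Complex.sin ((s : ℂ) * (π/2 : ℝ)) := by
      rw [Complex.sin]
      push_cast
      ring_nf
      simp only [Complex.I_sq]
      ring
    have hsin : Real.sin (π*(s/2)) ≠ 0 := by
      rw [Real.sin_ne_zero_iff]
      intro n hn
      have hpi := Real.pi_ne_zero
      have h5 : (n : ℝ) = s/2 := by
        rw [mul_comm] at hn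
        exact mul_left_cancel₀ hpi hn
      have h6 : |(n:ℝ)| < 1 := by
        rw [h5, abs_div, abs_two]
        linarith
      have h7 : n = 0 := by
        have h8 : |n| < 1 := by exact_mod_cast h6
        rw [abs_lt] at h8
        omega
      rw [h7] at h5
      simp at h5
      exact hs0 (by linarith)
    have hR : π / (Real.Gamma (1+s/2) * Real.Gamma (1-s/2)) = 2 * Real.sin (π*(s/2)) / s := by
      have h3 : Real.Gamma (1+s/2) = (s/2) * Real.Gamma (s/2) := by
        rw [show (1:ℝ)+s/2 = s/2+1 by ring, Real.Gamma_add_one (by simpa using hs0)]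
      have h4 : Real.Gamma (s/2) * Real.Gamma (1-s/2) = π / Real.sin (π*(s/2)) :=
        Real.Gamma_mul_Gamma_one_sub (s/2)
      rw [h3, mul_assoc, h4]
      field_simp
    rw [hnum, hR]
    have hsc : Complex.sin ((s:ℂ) * ((π/2 : ℝ):ℂ)) = ((Real.sin (π*(s/2)) : ℝ) : ℂ) := by
      rw [show (s:ℂ) * ((π/2:ℝ):ℂ) = (((π*(s/2)) : ℝ) : ℂ) by push_cast; ring,
        Complex.ofReal_sin]
    rw [hsc]
    push_cast
    have hI := Complex.I_ne_zero
    have hs0' : (s:ℂ) ≠ 0 := Complex.ofReal_ne_zero.mpr hs0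
    field_simp

lemma cosFour_formula (s : ℝ) (hs : |s| < 1) (m : ℕ) :
    cosFour s (2*m) = ((π * (Nat.factorial (2*m)) /
      (4^m * Real.Gamma (m+1+s/2) * Real.Gamma (m+1-s/2)) : ℝ) : ℂ) := by
  have habs := abs_lt.mp hs
  induction m with
  | zero => simpa using cosFour_zero s hs
  | succ m ih =>
    have hrec := cosFour_rec s (2*m)
    have hm0 : (0:ℝ) ≤ m := Nat.cast_nonneg m
    have hx1 : (0:ℝ) < m+1+s/2 := by linarith
    have hx2 : (0:ℝ) < m+1-s/2 := by linarith
    have hg1 : 0 < Real.Gamma (m+1+s/2) := Real.Gamma_pos_of_pos hx1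
    have hg2 : 0 < Real.Gamma (m+1-s/2) := Real.Gamma_pos_of_pos hx2
    have hg1' : ((Real.Gamma (m+1+s/2) : ℝ) : ℂ) ≠ 0 := Complex.ofReal_ne_zero.mpr hg1.ne'
    have hg2' : ((Real.Gamma (m+1-s/2) : ℝ) : ℂ) ≠ 0 := Complex.ofReal_ne_zero.mpr hg2.ne'
    have hAr : (0:ℝ) < (((2*m:ℕ):ℝ)+2)^2 - s^2 := by
      have : (0:ℝ) ≤ ((2*m:ℕ):ℝ) := Nat.cast_nonneg _
      nlinarith
    have hA : (((2*m:ℕ):ℂ)+2)^2 - (s:ℂ)^2 ≠ 0 := by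
      rw [show (((2*m:ℕ):ℂ)+2)^2 - (s:ℂ)^2 = ((((((2*m:ℕ):ℝ)+2)^2 - s^2 : ℝ)) : ℂ) by
        push_cast; ring]
      exact Complex.ofReal_ne_zero.mpr hAr.ne'
    have hidx : 2*(m+1) = 2*m+2 := by ring
    rw [hidx]
    apply mul_left_cancel₀ hA
    rw [hrec, ih]
    have e1 : ((m+1:ℕ):ℝ)+1+s/2 = (m+1+s/2)+1 := by push_cast; ring
    have e2 : ((m+1:ℕ):ℝ)+1-s/2 = (m+1-s/2)+1 := by push_cast; ring
    rw [e1, e2, Real.Gamma_add_one hx1.ne', Real.Gamma_add_one hx2.ne']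
    have efac : (Nat.factorial (2*m+2) : ℝ)
        = (2*m+2) * ((2*m+1) * Nat.factorial (2*m)) := by
      rw [show 2*m+2 = (2*m+1)+1 by ring, Nat.factorial_succ, Nat.factorial_succ]
      push_cast; ring
    rw [efac]
    have key : ((((2*m:ℕ):ℝ))+2)*((((2*m:ℕ):ℝ))+1)
          * (π * ((2*m).factorial:ℝ) / (4 ^ m * Real.Gamma (↑m + 1 + s / 2) * Real.Gamma (↑m + 1 - s / 2)))
        = (((((2*m:ℕ):ℝ))+2)^2 - s^2)
          * (π * ((2 * (m:ℝ) + 2) * ((2 * (m:ℝ) + 1) * ((2 * m).factorial:ℝ)))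
            / (4 ^ (m + 1) * ((↑m + 1 + s / 2) * Real.Gamma (↑m + 1 + s / 2))
              * ((↑m + 1 - s / 2) * Real.Gamma (↑m + 1 - s / 2)))) := by
      rw [mul_div_assoc', mul_div_assoc', div_eq_div_iff (by positivity) (by positivity)]
      push_cast
      ring
    rw [show ((2*m:ℕ):ℂ)+2 = (((((2*m:ℕ):ℝ))+2 : ℝ) : ℂ) by push_cast; ring,
      show ((((2*m:ℕ):ℝ)+2 : ℝ) : ℂ)*(((2*m:ℕ):ℂ)+1)
        = (((((2*m:ℕ):ℝ)+2)*(((2*m:ℕ):ℝ)+1) : ℝ) : ℂ) by push_cast; ring,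
      show ((((2*m:ℕ):ℝ)+2 : ℝ) : ℂ)^2 - (s:ℂ)^2
        = ((((((2*m:ℕ):ℝ))+2)^2 - s^2 : ℝ) : ℂ) by push_cast; ring,
      ← Complex.ofReal_mul, ← Complex.ofReal_mul]
    exact Complex.ofReal_inj.mpr key

/-- Fourier transform of `W_j`:
`E[e^{isW_j}] = Γ(j)² / (Γ(j+s/2)Γ(j-s/2))` for `|s| < 1`. -/
theorem statement12 {j : ℕ} (hj : 1 ≤ j) (s : ℝ) (hs : |s| < 1) :
    ∫ v, Complex.exp (Complex.I * (s : ℂ) * (v : ℂ)) ∂(wMeasure j)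
      = ((Real.Gamma j ^ 2 /
          (Real.Gamma (j + s / 2) * Real.Gamma (j - s / 2)) : ℝ) : ℂ) := by
  obtain ⟨m, rfl⟩ : ∃ m, j = m + 1 := ⟨j - 1, by omega⟩
  set c : ℝ := 4 ^ m * ((m.factorial : ℝ))^2 / (π * ((2*m).factorial : ℝ)) with hc
  set S : Set ℝ := Set.Ioo (-(π/2)) (π/2) with hS
  have hcpos : 0 ≤ c := by rw [hc]; positivity
  set g : ℝ → ℝ := Set.indicator S (fun u => c * Real.cos u ^ (2*m)) with hg
  have hgnn : ∀ v, 0 ≤ g v := by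
    intro v
    apply Set.indicator_nonneg
    intro u _
    rw [pow_mul]
    positivity
  have hgm : Measurable fun v => (g v).toNNReal := by
    apply Measurable.real_toNNReal
    rw [hg]
    exact (measurable_const.mul ((Real.continuous_cos.measurable).pow_const _)).indicator
      measurableSet_Ioo
  have hw : wMeasure (m+1) = volume.withDensity (fun v => (((g v).toNNReal : ℝ≥0) : ℝ≥0∞)) := by
    rfl
  rw [hw, integral_withDensity_eq_integral_smul hgm]
  have hpt : ∀ v : ℝ, (g v).toNNReal • Complex.exp (Complex.I * (s:ℂ) * (v:ℂ))
      = Set.indicator S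
          (fun v => (c:ℂ) * (Complex.exp (Complex.I * (s:ℂ) * (v:ℂ)) * ((Real.cos v ^ (2*m) : ℝ):ℂ))) v := by
    intro v
    rw [NNReal.smul_def, Real.coe_toNNReal _ (hgnn v), hg]
    by_cases hv : v ∈ S
    · rw [Set.indicator_of_mem hv, Set.indicator_of_mem hv, Complex.real_smul]
      push_cast
      ring
    · rw [Set.indicator_of_notMem hv, Set.indicator_of_notMem hv, zero_smul]
  simp_rw [hpt]
  rw [MeasureTheory.integral_indicator measurableSet_Ioo, ← integral_Ioc_eq_integral_Ioo,
    ← intervalIntegral.integral_of_le (by have := Real.pi_pos; linarith),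
    intervalIntegral.integral_const_mul]
  have hcf : (∫ v in (-(π/2))..(π/2),
      Complex.exp (Complex.I * (s:ℂ) * (v:ℂ)) * ((Real.cos v ^ (2*m) : ℝ):ℂ)) = cosFour s (2*m) := rfl
  rw [hcf, cosFour_formula s hs m]
  have habs := abs_lt.mp hs
  have hm0 : (0:ℝ) ≤ m := Nat.cast_nonneg m
  have hx1 : (0:ℝ) < m+1+s/2 := by linarith
  have hx2 : (0:ℝ) < m+1-s/2 := by linarith
  have hg1 : 0 < Real.Gamma (m+1+s/2) := Real.Gamma_pos_of_pos hx1
  have hg2 : 0 < Real.Gamma (m+1-s/2) := Real.Gamma_pos_of_pos hx2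
  have hreal : c * (π * ((2*m).factorial : ℝ) /
        (4 ^ m * Real.Gamma (↑m + 1 + s / 2) * Real.Gamma (↑m + 1 - s / 2)))
      = Real.Gamma ((m+1:ℕ):ℝ) ^ 2 /
          (Real.Gamma (((m+1:ℕ):ℝ) + s / 2) * Real.Gamma (((m+1:ℕ):ℝ) - s / 2)) := by
    rw [hc]
    push_cast
    rw [Real.Gamma_nat_eq_factorial]
    have hfac : (0:ℝ) < ((2*m).factorial : ℝ) := by exact_mod_cast (2*m).factorial_pos
    rw [div_mul_div_comm, div_eq_div_iff (by positivity) (by positivity)]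
    ring
  rw [← Complex.ofReal_mul, hreal]
end

section
/- Let j ≥ 1, let β_{j,j−1} have the Beta(j, j−1) distribution (with Beta(1,0) the Dirac mass at 1) and, independently, let W_j have density (4^{j−1}((j−1)!)²/(π(2j−2)!)) cos^{2(j−1)}(v) on (−π/2, π/2). Set T_j := log(β_{j,j−1} · 2 cos(W_j)). Then for every real t > −1, E[e^{t T_j}] = Γ(j) Γ(j+t) / Γ(j + t/2)². -/
open MeasureTheory ProbabilityTheory

/-- The `Beta(a,b)` probability measure on `[0,1]`. -/
noncomputable def betaMeasure (a b : ℝ) : Measure ℝ :=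
  volume.withDensity fun t => ENNReal.ofReal
    (Set.indicator (Set.Ioo 0 1)
      (fun u => Real.Gamma (a + b) / (Real.Gamma a * Real.Gamma b) *
        u ^ (a - 1) * (1 - u) ^ (b - 1)) t)

section Aux

open Set Real
open scoped NNReal ENNReal


lemma my_measurable_rpow_const (y : ℝ) : Measurable fun x : ℝ => x ^ y := by
  have h : (fun x : ℝ => x ^ y) = fun x =>
      if x = 0 then (if y = 0 then 1 else 0)
      else if 0 < x then Real.exp (Real.log x * y)
      else Real.exp (Real.log x * y) * Real.cos (y * Real.pi) := by
    funext x
    rcases lt_trichotomy x 0 with hx | hx | hx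
    · rw [if_neg hx.ne, if_neg (not_lt.2 hx.le), Real.rpow_def_of_neg hx]
    · subst hx
      simp [Real.rpow_def_of_pos, Real.zero_rpow, Real.rpow_zero]
      split_ifs with h0
      · simp [h0]
      · simp [Real.zero_rpow h0]
    · rw [if_neg hx.ne', if_pos hx, Real.rpow_def_of_pos hx]
  rw [h]
  refine Measurable.ite (measurableSet_eq) measurable_const ?_
  exact Measurable.ite measurableSet_Ioi
    ((Real.measurable_log.mul_const y).exp)
    (((Real.measurable_log.mul_const y).exp).mul_const _)

lemma real_beta {a b : ℝ} (ha : 0 < a) (hb : 0 < b) :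
    ∫ x in Set.Ioo (0:ℝ) 1, x ^ (a-1) * (1-x) ^ (b-1)
      = Real.Gamma a * Real.Gamma b / Real.Gamma (a+b) := by
  have hR : Complex.betaIntegral a b
      = ((∫ x in (0:ℝ)..1, x ^ (a-1) * (1-x) ^ (b-1) : ℝ) : ℂ) := by
    rw [Complex.betaIntegral, ← intervalIntegral.integral_ofReal]
    refine intervalIntegral.integral_congr fun x hx => ?_
    rw [Set.uIcc_of_le zero_le_one] at hx
    have e1 : ((a:ℂ) - 1) = ((a - 1 : ℝ) : ℂ) := by push_cast; ring
    have e2 : ((b:ℂ) - 1) = ((b - 1 : ℝ) : ℂ) := by push_cast; ring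
    have e3 : (1 - (x:ℂ)) = ((1 - x : ℝ) : ℂ) := by push_cast; ring
    rw [e1, e2, e3, ← Complex.ofReal_cpow hx.1, ← Complex.ofReal_cpow (by linarith [hx.2] : (0:ℝ) ≤ 1 - x), Complex.ofReal_mul]
  have h := Complex.Gamma_mul_Gamma_eq_betaIntegral
    (s := (a:ℂ)) (t := (b:ℂ)) (by simpa using ha) (by simpa using hb)
  rw [hR] at h
  have hab : ((a:ℂ) + b) = ((a + b : ℝ) : ℂ) := by push_cast; ring
  rw [hab, Complex.Gamma_ofReal, Complex.Gamma_ofReal, Complex.Gamma_ofReal] at h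
  have h' : Real.Gamma a * Real.Gamma b
      = Real.Gamma (a+b) * ∫ x in (0:ℝ)..1, x ^ (a-1) * (1-x) ^ (b-1) := by
    exact_mod_cast h
  have hG : Real.Gamma (a+b) ≠ 0 := (Real.Gamma_pos_of_pos (by linarith)).ne'
  rw [intervalIntegral.integral_of_le zero_le_one, integral_Ioc_eq_integral_Ioo] at h'
  field_simp at h' ⊢
  linarith [h']

lemma cos_rpow_int {s : ℝ} (hs : -1 < s) :
    ∫ v in Set.Ioo (-(Real.pi/2)) (Real.pi/2), Real.cos v ^ s
      = 2 ^ s * Real.Gamma ((s+1)/2) ^ 2 / Real.Gamma (s+1) := by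
  set p : ℝ := (s-1)/2 with hp
  -- step 1 : sin substitution
  have himg : Real.sin '' Set.Ioo (-(Real.pi/2)) (Real.pi/2) = Set.Ioo (-1:ℝ) 1 := by
    ext x
    constructor
    · rintro ⟨v, hv, rfl⟩
      exact Real.mapsTo_sin_Ioo hv
    · intro hx
      exact ⟨Real.arcsin x, ⟨Real.neg_pi_div_two_lt_arcsin.2 hx.1,
        Real.arcsin_lt_pi_div_two.2 hx.2⟩, Real.sin_arcsin hx.1.le hx.2.le⟩
  have hderiv : ∀ v ∈ Set.Ioo (-(Real.pi/2)) (Real.pi/2),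
      HasDerivWithinAt Real.sin (Real.cos v) (Set.Ioo (-(Real.pi/2)) (Real.pi/2)) v :=
    fun v _ => (Real.hasDerivAt_sin v).hasDerivWithinAt
  have hinj : Set.InjOn Real.sin (Set.Ioo (-(Real.pi/2)) (Real.pi/2)) :=
    Real.injOn_sin.mono Set.Ioo_subset_Icc_self
  have step1 : ∫ x in Set.Ioo (-1:ℝ) 1, (1 - x^2) ^ p
      = ∫ v in Set.Ioo (-(Real.pi/2)) (Real.pi/2), Real.cos v ^ s := by
    rw [← himg, integral_image_eq_integral_abs_deriv_smul measurableSet_Ioo hderiv hinj]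
    refine setIntegral_congr_fun measurableSet_Ioo fun v hv => ?_
    have hc : 0 < Real.cos v := Real.cos_pos_of_mem_Ioo hv
    have h1 : (1:ℝ) - Real.sin v ^ 2 = Real.cos v ^ 2 := (Real.sin_sq_add_cos_sq v ▸ by ring)
    rw [smul_eq_mul, abs_of_pos hc, h1]
    have h2 : (Real.cos v ^ 2 : ℝ) ^ p = Real.cos v ^ (2 * p) := by
      rw [← Real.rpow_natCast (Real.cos v) 2, ← Real.rpow_mul hc.le]
      norm_num
    rw [h2]
    rw [show s = 1 + 2*p by rw [hp]; ring, Real.rpow_add hc, Real.rpow_one]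
  -- step 2 : affine substitution
  have step2 : ∫ x in Set.Ioo (-1:ℝ) 1, (1 - x^2) ^ p
      = 2 * ∫ u in Set.Ioo (0:ℝ) 1, (4:ℝ)^p * (u ^ p * (1-u) ^ p) := by
    have himg2 : (fun u : ℝ => 2*u - 1) '' Set.Ioo 0 1 = Set.Ioo (-1:ℝ) 1 := by
      ext x
      constructor
      · rintro ⟨u, hu, rfl⟩
        simp only [Set.mem_Ioo]
        constructor <;> [linarith [hu.1]; linarith [hu.2]]
      · intro hx
        exact ⟨(x+1)/2, ⟨by linarith [hx.1], by linarith [hx.2]⟩, by ring⟩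
    have hderiv2 : ∀ u ∈ Set.Ioo (0:ℝ) 1,
        HasDerivWithinAt (fun u : ℝ => 2*u - 1) 2 (Set.Ioo 0 1) u := by
      intro u _
      simpa using (((hasDerivAt_id u).const_mul 2).sub_const 1).hasDerivWithinAt
    have hinj2 : Set.InjOn (fun u : ℝ => 2*u - 1) (Set.Ioo 0 1) := by
      intro u _ v _ h
      dsimp at h; linarith
    rw [← himg2, integral_image_eq_integral_abs_deriv_smul measurableSet_Ioo hderiv2 hinj2]
    rw [← MeasureTheory.integral_const_mul]
    refine setIntegral_congr_fun measurableSet_Ioo fun u hu => ?_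
    have h1 : (1:ℝ) - (2*u-1)^2 = 4 * (u * (1-u)) := by ring
    rw [smul_eq_mul, h1]
    rw [Real.mul_rpow (by norm_num) (mul_nonneg hu.1.le (by linarith [hu.2])),
      Real.mul_rpow hu.1.le (by linarith [hu.2])]
    norm_num
  -- step 3 : beta evaluation
  have hpp : (0:ℝ) < p + 1 := by rw [hp]; linarith
  have step3 : ∫ u in Set.Ioo (0:ℝ) 1, u ^ p * (1-u) ^ p
      = Real.Gamma (p+1) * Real.Gamma (p+1) / Real.Gamma (p+1+(p+1)) := by
    have := real_beta hpp hpp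
    simpa using this
  rw [← step1, step2, MeasureTheory.integral_const_mul, step3]
  have e1 : p + 1 = (s+1)/2 := by rw [hp]; ring
  have e2 : p + 1 + (p+1) = s + 1 := by rw [hp]; ring
  have h4 : (4:ℝ)^p = 2^(2*p) := by
    rw [show (4:ℝ) = 2^(2:ℝ) by norm_num [← Real.rpow_natCast 2 2], ← Real.rpow_mul (by norm_num)]
  have h24 : (2:ℝ) * (4:ℝ)^p = 2^s := by
    rw [show s = 1 + 2*p by rw [hp]; ring, Real.rpow_add (by norm_num : (0:ℝ) < 2),
      Real.rpow_one, h4]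
  rw [e1, show (s+1)/2 + (s+1)/2 = s + 1 by ring, ← h24]
  ring

lemma integral_withDensity_indicator {S : Set ℝ} (hS : MeasurableSet S) {d : ℝ → ℝ}
    (hd : Measurable d) (hd0 : ∀ x ∈ S, 0 ≤ d x) (g : ℝ → ℝ) :
    ∫ x, g x ∂(volume.withDensity fun x => ENNReal.ofReal (S.indicator d x))
      = ∫ x in S, d x * g x := by
  have hmeas : Measurable fun x => Real.toNNReal (S.indicator d x) :=
    (hd.indicator hS).real_toNNReal
  have : (fun x => ENNReal.ofReal (S.indicator d x))
      = fun x => ((Real.toNNReal (S.indicator d x) : ℝ≥0) : ℝ≥0∞) := rfl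
  rw [this, integral_withDensity_eq_integral_smul hmeas, ← integral_indicator hS]
  congr 1
  funext x
  by_cases hx : x ∈ S
  · rw [Set.indicator_of_mem hx, Set.indicator_of_mem hx, NNReal.smul_def,
      Real.coe_toNNReal _ (hd0 x hx), smul_eq_mul]
  · rw [Set.indicator_of_notMem hx, Set.indicator_of_notMem hx]
    simp

lemma withDensity_indicator_ne_zero {S : Set ℝ} (hS : MeasurableSet S) {d : ℝ → ℝ}
    (hd : Measurable d) (hpos : ∀ x ∈ S, 0 < d x) (hvol : volume S ≠ 0) :
    volume.withDensity (fun x => ENNReal.ofReal (S.indicator d x)) ≠ 0 := by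
  intro h
  have h1 : (volume.withDensity (fun x => ENNReal.ofReal (S.indicator d x))) Set.univ = 0 := by
    rw [h]; rfl
  rw [withDensity_apply _ MeasurableSet.univ, Measure.restrict_univ] at h1
  have hmeas : Measurable fun x => ENNReal.ofReal (S.indicator d x) :=
    (hd.indicator hS).ennreal_ofReal
  rw [lintegral_eq_zero_iff hmeas] at h1
  have hsub : S ⊆ {x | ENNReal.ofReal (S.indicator d x) ≠ 0} := by
    intro x hx
    simp only [Set.mem_setOf_eq, ne_eq, ENNReal.ofReal_eq_zero, not_le,
      Set.indicator_of_mem hx]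
    exact hpos x hx
  have := measure_mono_null hsub h1
  exact hvol this

lemma beta_factor {j : ℕ} (hj : 1 ≤ j) {t : ℝ} (ht : -1 < t) :
    ∫ x, Real.exp (t * Real.log x)
        ∂(if j = 1 then Measure.dirac (1:ℝ) else _root_.betaMeasure j (j - 1 : ℕ))
      = Real.Gamma (2*(j:ℝ)-1) * Real.Gamma ((j:ℝ)+t)
        / (Real.Gamma (j:ℝ) * Real.Gamma (2*(j:ℝ)-1+t)) := by
  have hΓt : Real.Gamma (1+t) ≠ 0 := (Real.Gamma_pos_of_pos (by linarith)).ne'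
  split_ifs with h1
  · subst h1
    rw [integral_dirac]
    norm_num [Real.Gamma_one]
    rw [div_self hΓt]
  · have hj2 : 2 ≤ j := by omega
    set a : ℝ := (j:ℝ) with hadef
    have ha2 : (2:ℝ) ≤ a := by rw [hadef]; exact_mod_cast hj2
    set b : ℝ := ((j - 1 : ℕ):ℝ) with hbdef
    have hba : b = a - 1 := by
      rw [hbdef, hadef, Nat.cast_sub hj, Nat.cast_one]
    have hb : 0 < b := by rw [hba]; linarith
    have hat : 0 < a + t := by linarith
    have hd : Measurable fun u : ℝ => Real.Gamma (a + b) / (Real.Gamma a * Real.Gamma b) *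
        u ^ (a - 1) * (1 - u) ^ (b - 1) :=
      ((measurable_const.mul (my_measurable_rpow_const (a-1))).mul
        ((my_measurable_rpow_const (b-1)).comp (measurable_const.sub measurable_id)))
    have hC : 0 < Real.Gamma (a + b) / (Real.Gamma a * Real.Gamma b) := by
      apply div_pos (Real.Gamma_pos_of_pos (by linarith))
      exact mul_pos (Real.Gamma_pos_of_pos (by linarith)) (Real.Gamma_pos_of_pos hb)
    have hd0 : ∀ x ∈ Set.Ioo (0:ℝ) 1, 0 ≤ Real.Gamma (a + b) / (Real.Gamma a * Real.Gamma b) *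
        x ^ (a - 1) * (1 - x) ^ (b - 1) := by
      intro x hx
      have h1' : (0:ℝ) < x := hx.1
      have h2' : (0:ℝ) < 1 - x := by linarith [hx.2]
      positivity
    rw [_root_.betaMeasure, integral_withDensity_indicator measurableSet_Ioo hd hd0]
    have hcong : ∀ x ∈ Set.Ioo (0:ℝ) 1,
        Real.Gamma (a + b) / (Real.Gamma a * Real.Gamma b) *
          x ^ (a - 1) * (1 - x) ^ (b - 1) * Real.exp (t * Real.log x)
        = Real.Gamma (a + b) / (Real.Gamma a * Real.Gamma b) *
          (x ^ (a + t - 1) * (1 - x) ^ (b - 1)) := by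
      intro x hx
      rw [mul_comm t, ← Real.rpow_def_of_pos hx.1,
        show a + t - 1 = (a-1)+t by ring, Real.rpow_add hx.1]
      ring
    rw [setIntegral_congr_fun measurableSet_Ioo hcong, MeasureTheory.integral_const_mul]
    have := real_beta hat hb
    rw [show a + t - 1 = (a+t) - 1 by ring] at *
    rw [this]
    have hΓa : Real.Gamma a ≠ 0 := (Real.Gamma_pos_of_pos (by linarith)).ne'
    have hΓb : Real.Gamma b ≠ 0 := (Real.Gamma_pos_of_pos hb).ne'
    have hΓab : Real.Gamma (a+t+b) ≠ 0 := (Real.Gamma_pos_of_pos (by linarith)).ne'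
    rw [hba] at *
    rw [show a + (a-1) = 2*a-1 by ring, show a + t + (a-1) = 2*a-1+t by ring] at *
    field_simp

lemma w_factor {j : ℕ} (hj : 1 ≤ j) {t : ℝ} (ht : -1 < t) :
    ∫ x, Real.exp (t * Real.log (2 * Real.cos x)) ∂(wMeasure j)
      = Real.Gamma (j:ℝ)^2 * Real.Gamma (2*(j:ℝ)-1+t)
        / (Real.Gamma (2*(j:ℝ)-1) * Real.Gamma ((j:ℝ)+t/2)^2) := by
  set a : ℝ := (j:ℝ) with hadef
  have ha1 : (1:ℝ) ≤ a := by rw [hadef]; exact_mod_cast hj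
  set C : ℝ := 4 ^ (j - 1) * (Nat.factorial (j - 1) : ℝ) ^ 2 /
        (Real.pi * (Nat.factorial (2 * j - 2) : ℝ)) with hCdef
  have hd : Measurable fun u : ℝ => C * Real.cos u ^ (2 * (j - 1)) :=
    measurable_const.mul (Real.measurable_cos.pow_const _)
  have hC0 : 0 < C := by
    rw [hCdef]
    have := Real.pi_pos
    have h1 : 0 < (Nat.factorial (j-1) : ℝ) := by exact_mod_cast (Nat.factorial_pos _)
    have h2 : 0 < (Nat.factorial (2*j-2) : ℝ) := by exact_mod_cast (Nat.factorial_pos _)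
    positivity
  have hd0 : ∀ x ∈ Set.Ioo (-(Real.pi/2)) (Real.pi/2),
      0 ≤ C * Real.cos x ^ (2 * (j - 1)) := by
    intro x hx
    have hc : 0 < Real.cos x := Real.cos_pos_of_mem_Ioo hx
    positivity
  rw [wMeasure, integral_withDensity_indicator measurableSet_Ioo hd hd0]
  set s : ℝ := 2*a - 2 + t with hsdef
  have hs : -1 < s := by rw [hsdef]; linarith
  have hcast : ((2 * (j - 1) : ℕ) : ℝ) = 2*a - 2 := by
    rw [hadef]
    push_cast [Nat.mul_sub, Nat.cast_sub (by omega : 2*1 ≤ 2*j)]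
    ring
  have hcong : ∀ x ∈ Set.Ioo (-(Real.pi/2)) (Real.pi/2),
      C * Real.cos x ^ (2 * (j - 1)) * Real.exp (t * Real.log (2 * Real.cos x))
      = C * 2 ^ t * Real.cos x ^ s := by
    intro x hx
    have hc : 0 < Real.cos x := Real.cos_pos_of_mem_Ioo hx
    have h2c : (0:ℝ) < 2 * Real.cos x := by linarith
    rw [mul_comm t, ← Real.rpow_def_of_pos h2c,
      Real.mul_rpow (by norm_num) hc.le,
      ← Real.rpow_natCast (Real.cos x) (2 * (j - 1)), hcast,
      hsdef, Real.rpow_add hc (2*a-2) t]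
    ring
  rw [setIntegral_congr_fun measurableSet_Ioo hcong, MeasureTheory.integral_const_mul,
    cos_rpow_int hs]
  -- now pure algebra
  have hfac1 : (Nat.factorial (j - 1) : ℝ) = Real.Gamma a := by
    rw [← Real.Gamma_nat_eq_factorial (j-1)]
    congr 1
    rw [hadef, Nat.cast_sub hj]
    push_cast; ring
  have hfac2 : (Nat.factorial (2 * j - 2) : ℝ) = Real.Gamma (2*a - 1) := by
    rw [← Real.Gamma_nat_eq_factorial (2*j-2)]
    congr 1
    rw [hadef, Nat.cast_sub (by omega : 2 ≤ 2*j)]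
    push_cast; ring
  have h4 : (4:ℝ) ^ (j - 1) = 2 ^ (2*a - 2 : ℝ) := by
    rw [show (4:ℝ) = 2^(2:ℕ) by norm_num, ← pow_mul, ← Real.rpow_natCast 2 (2*(j-1)), hcast]
  have hdup := Real.Gamma_mul_Gamma_add_half (a + (t-1)/2)
  rw [show a + (t-1)/2 + 1/2 = a + t/2 by ring,
    show 2*(a + (t-1)/2) = 2*a-1+t by ring] at hdup
  have he1 : (s+1)/2 = a + (t-1)/2 := by rw [hsdef]; ring
  have he2 : s + 1 = 2*a - 1 + t := by rw [hsdef]; ring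
  rw [he1, he2, hCdef, hfac1, hfac2, h4]
  set Q : ℝ := 2 ^ (1 - (2*a-1+t)) with hQdef
  have hππ : Real.sqrt Real.pi ^ 2 = Real.pi := Real.sq_sqrt Real.pi_pos.le
  have hsq : Real.Gamma (a + (t-1)/2) ^ 2 * Real.Gamma (a+t/2) ^ 2
      = Real.Gamma (2*a-1+t) ^ 2 * Q ^ 2 * Real.pi := by
    linear_combination (Real.Gamma (a + (t-1)/2) * Real.Gamma (a+t/2)
      + Real.Gamma (2*a-1+t) * Q * Real.sqrt Real.pi) * hdup
      + Real.Gamma (2*a-1+t)^2 * Q^2 * hππ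
  have hQ1 : (2:ℝ) ^ (2*a-2 : ℝ) * 2 ^ t * 2 ^ s * Q^2 = 1 := by
    rw [hQdef, sq, ← Real.rpow_add (by norm_num : (0:ℝ) < 2),
      ← Real.rpow_add (by norm_num : (0:ℝ) < 2),
      ← Real.rpow_add (by norm_num : (0:ℝ) < 2),
      ← Real.rpow_add (by norm_num : (0:ℝ) < 2)]
    rw [show 2*a-2 + t + s + (1 - (2*a-1+t) + (1 - (2*a-1+t))) = 0 by rw [hsdef]; ring,
      Real.rpow_zero]
  have hπ0 : Real.pi ≠ 0 := Real.pi_ne_zero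
  set G1 : ℝ := Real.Gamma (a + (t-1)/2) with hG1
  set G2 : ℝ := Real.Gamma (a + t/2) with hG2
  set G3 : ℝ := Real.Gamma (2*a-1+t) with hG3
  set G4 : ℝ := Real.Gamma (2*a-1) with hG4
  set G5 : ℝ := Real.Gamma a with hG5
  set P1 : ℝ := (2:ℝ) ^ (2*a-2 : ℝ) with hP1
  set P2 : ℝ := (2:ℝ) ^ t with hP2
  set P3 : ℝ := (2:ℝ) ^ s with hP3
  have hΓ1 : Real.Gamma (2*a-1) ≠ 0 := (Real.Gamma_pos_of_pos (by linarith)).ne'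
  have hΓ2 : Real.Gamma (2*a-1+t) ≠ 0 := (Real.Gamma_pos_of_pos (by linarith)).ne'
  have hΓ3 : Real.Gamma (a+t/2) ≠ 0 := (Real.Gamma_pos_of_pos (by linarith)).ne'
  rw [← hG3] at hΓ2
  rw [← hG4] at hΓ1
  rw [← hG2] at hΓ3
  field_simp
  linear_combination P1 * P2 * P3 * G5^2 * hsq
    + G5 ^ 2 * G3 ^ 2 * Real.pi * hQ1

lemma wMeasure_density_pos {j : ℕ} (hj : 1 ≤ j) :
    ∀ x ∈ Set.Ioo (-(Real.pi/2)) (Real.pi/2),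
      0 < 4 ^ (j - 1) * (Nat.factorial (j - 1) : ℝ) ^ 2 /
        (Real.pi * (Nat.factorial (2 * j - 2) : ℝ)) * Real.cos x ^ (2 * (j - 1)) := by
  intro x hx
  have hc : 0 < Real.cos x := Real.cos_pos_of_mem_Ioo hx
  have := Real.pi_pos
  have h1 : 0 < (Nat.factorial (j-1) : ℝ) := by exact_mod_cast (Nat.factorial_pos _)
  have h2 : 0 < (Nat.factorial (2*j-2) : ℝ) := by exact_mod_cast (Nat.factorial_pos _)
  positivity

end Aux

set_option maxHeartbeats 2000000 in
/-- (Laplace transform of `T_j = log(β_{j,j-1} · 2 cos W_j)`), where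
`β ~ Beta(j, j-1)` (Dirac mass at `1` for `j = 1`) and independently `W ~ σ_{2(j-1)}`:
`E[e^{tT_j}] = Γ(j)Γ(j+t)/Γ(j+t/2)²` for `t > -1`. -/
theorem statement13 {j : ℕ} (hj : 1 ≤ j)
    {Ω : Type*} [MeasurableSpace Ω] (P : Measure Ω) [IsProbabilityMeasure P]
    (β W : Ω → ℝ)
    (hβ : Measure.map β P =
      if j = 1 then Measure.dirac 1 else _root_.betaMeasure j (j - 1 : ℕ))
    (hW : Measure.map W P = wMeasure j)
    (hindep : IndepFun β W P)
    (T : Ω → ℝ)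
    (hT : ∀ ω, T ω = Real.log (β ω * (2 * Real.cos (W ω))))
    (t : ℝ) (ht : -1 < t) :
    ∫ ω, Real.exp (t * T ω) ∂P
      = Real.Gamma j * Real.Gamma (j + t) / Real.Gamma (j + t / 2) ^ 2 := by
  -- the two laws are nonzero measures
  have hβne : (if j = 1 then Measure.dirac (1:ℝ) else _root_.betaMeasure j (j - 1 : ℕ)) ≠ 0 := by
    split_ifs with h1
    · intro h
      have h2 : (Measure.dirac (1:ℝ)) Set.univ = 0 := by
        rw [h]; exact Measure.coe_zero ▸ rfl
      simp at h2
    · have hj2 : 2 ≤ j := by omega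
      refine withDensity_indicator_ne_zero measurableSet_Ioo
        ((measurable_const.mul (my_measurable_rpow_const _)).mul
          ((my_measurable_rpow_const _).comp (measurable_const.sub measurable_id))) ?_ ?_
      · intro x hx
        have hx1 : (0:ℝ) < x := hx.1
        have hx2 : (0:ℝ) < 1 - x := by linarith [hx.2]
        have hb : (0:ℝ) < ((j - 1 : ℕ):ℝ) := by exact_mod_cast Nat.pos_of_ne_zero (by omega)
        have ha : (0:ℝ) < (j:ℝ) := by exact_mod_cast Nat.pos_of_ne_zero (by omega)
        have hab := Real.Gamma_pos_of_pos (by linarith : (0:ℝ) < (j:ℝ) + ((j - 1 : ℕ):ℝ))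
        have hga := Real.Gamma_pos_of_pos ha
        have hgb := Real.Gamma_pos_of_pos hb
        positivity
      · rw [Real.volume_Ioo]
        simp
  have hWne : wMeasure j ≠ 0 := by
    refine withDensity_indicator_ne_zero measurableSet_Ioo
      (measurable_const.mul (Real.measurable_cos.pow_const _))
      (wMeasure_density_pos hj) ?_
    rw [Real.volume_Ioo]
    have := Real.pi_pos
    simp only [ne_eq, ENNReal.ofReal_eq_zero, not_le]
    linarith
  have hβae : AEMeasurable β P := by
    by_contra h
    rw [Measure.map_of_not_aemeasurable h] at hβ
    exact hβne hβ.symm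
  have hWae : AEMeasurable W P := by
    by_contra h
    rw [Measure.map_of_not_aemeasurable h] at hW
    exact hWne hW.symm
  -- a.e. positivity
  have hβpos : ∀ᵐ ω ∂P, 0 < β ω := by
    have hm : MeasurableSet (Set.Iic (0:ℝ)) := measurableSet_Iic
    have h0 : Measure.map β P (Set.Iic 0) = 0 := by
      rw [hβ]
      split_ifs with h1
      · rw [Measure.dirac_apply' _ hm]
        simp
      · rw [_root_.betaMeasure, withDensity_apply _ hm]
        rw [setLIntegral_congr_fun_ae hm (MeasureTheory.ae_of_all _ fun x hx => ?_), lintegral_zero]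
        have hmem : x ∉ Set.Ioo (0:ℝ) 1 := fun hc => absurd hc.1 (not_lt.2 hx)
        rw [Set.indicator_of_notMem hmem]
        simp
    have h2 : P (β ⁻¹' Set.Iic 0) = 0 := by
      rw [← Measure.map_apply_of_aemeasurable hβae hm]; exact h0
    rw [MeasureTheory.ae_iff]
    rw [show {ω | ¬ 0 < β ω} = β ⁻¹' Set.Iic 0 by ext ω; simp [not_lt]]
    exact h2
  have hWmem : ∀ᵐ ω ∂P, W ω ∈ Set.Ioo (-(Real.pi/2)) (Real.pi/2) := by
    have hm : MeasurableSet (Set.Ioo (-(Real.pi/2)) (Real.pi/2))ᶜ := measurableSet_Ioo.compl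
    have h0 : Measure.map W P (Set.Ioo (-(Real.pi/2)) (Real.pi/2))ᶜ = 0 := by
      rw [hW, wMeasure, withDensity_apply _ hm]
      rw [setLIntegral_congr_fun_ae hm (MeasureTheory.ae_of_all _ fun x hx => ?_), lintegral_zero]
      rw [Set.indicator_of_notMem hx]
      simp
    have h2 : P (W ⁻¹' (Set.Ioo (-(Real.pi/2)) (Real.pi/2))ᶜ) = 0 := by
      rw [← Measure.map_apply_of_aemeasurable hWae hm]; exact h0
    rw [MeasureTheory.ae_iff]
    exact h2
  -- rewrite the integrand
  set f : ℝ → ℝ := fun x => Real.exp (t * Real.log x) with hfdef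
  set g : ℝ → ℝ := fun v => Real.exp (t * Real.log (2 * Real.cos v)) with hgdef
  have hfm : Measurable f := (Real.measurable_log.const_mul t).exp
  have hgm : Measurable g :=
    ((Real.measurable_log.comp (measurable_const.mul Real.measurable_cos)).const_mul t).exp
  have hcongr : ∀ᵐ ω ∂P, Real.exp (t * T ω) = f (β ω) * g (W ω) := by
    filter_upwards [hβpos, hWmem] with ω h1 h2
    have hc : 0 < Real.cos (W ω) := Real.cos_pos_of_mem_Ioo h2
    have h2c : (0:ℝ) < 2 * Real.cos (W ω) := by linarith
    rw [hT ω, Real.log_mul h1.ne' h2c.ne', mul_add, Real.exp_add]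
  rw [MeasureTheory.integral_congr_ae hcongr]
  have hprod : ∫ ω, f (β ω) * g (W ω) ∂P
      = (∫ ω, f (β ω) ∂P) * ∫ ω, g (W ω) ∂P :=
    IndepFun.integral_fun_mul_eq_mul_integral (hindep.comp hfm hgm)
      (hfm.comp_aemeasurable hβae).aestronglyMeasurable
      (hgm.comp_aemeasurable hWae).aestronglyMeasurable
  rw [hprod]
  have hβint : ∫ ω, f (β ω) ∂P = ∫ x, f x ∂(Measure.map β P) :=
    (MeasureTheory.integral_map hβae hfm.aestronglyMeasurable).symm
  have hWint : ∫ ω, g (W ω) ∂P = ∫ x, g x ∂(Measure.map W P) :=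
    (MeasureTheory.integral_map hWae hgm.aestronglyMeasurable).symm
  rw [hβint, hWint, hβ, hW, hfdef, hgdef, beta_factor hj ht, w_factor hj ht]
  set a : ℝ := (j:ℝ) with hadef
  have ha1 : (1:ℝ) ≤ a := by rw [hadef]; exact_mod_cast hj
  have hΓa : Real.Gamma a ≠ 0 := (Real.Gamma_pos_of_pos (by linarith)).ne'
  have hΓ1 : Real.Gamma (2*a-1) ≠ 0 := (Real.Gamma_pos_of_pos (by linarith)).ne'
  have hΓ2 : Real.Gamma (2*a-1+t) ≠ 0 := (Real.Gamma_pos_of_pos (by linarith)).ne'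
  have hΓ3 : Real.Gamma (a+t/2) ≠ 0 := (Real.Gamma_pos_of_pos (by linarith)).ne'
  set A : ℝ := Real.Gamma (2*a-1) with hA
  set B : ℝ := Real.Gamma (a+t) with hB
  set Cg : ℝ := Real.Gamma a with hC
  set D : ℝ := Real.Gamma (2*a-1+t) with hD
  set E : ℝ := Real.Gamma (a+t/2) with hE
  field_simp
end
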